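/- arXiv:0806.3088 — 8 statements merged into one kernel-verified Lean document; each statement's English description precedes it below -/
import Mathlib

section
/- Let a ∈ (0,1) and t ∈ ℝ, and set z = e^{it}. Then Im( z(1−az)/(z−a) ) = 2a·sin t·(a·cos t − 1)/(1 − 2a·cos t + a²). In particular, for every t ∈ (0,π) one has Im( z(1−az)/(z−a) ) < 0. -/
open Complex Real

theorem stmt_3 (a : ℝ) (ha : a ∈ Set.Ioo (0:ℝ) 1) (t : ℝ) :
    (Complex.exp (Complex.I * t) * (1 - a * Complex.exp (Complex.I * t)) /
        (Complex.exp (Complex.I * t) - a)).im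
      = 2 * a * Real.sin t * (a * Real.cos t - 1) / (1 - 2 * a * Real.cos t + a^2) ∧
    (t ∈ Set.Ioo 0 Real.pi →
      (Complex.exp (Complex.I * t) * (1 - a * Complex.exp (Complex.I * t)) /
        (Complex.exp (Complex.I * t) - a)).im < 0) := by
  obtain ⟨ha0, ha1⟩ := ha
  set c := Real.cos t
  set s := Real.sin t
  have hcs : s^2 + c^2 = 1 := Real.sin_sq_add_cos_sq t
  have hD : 0 < 1 - 2 * a * c + a^2 := by
    nlinarith [Real.neg_one_le_cos t, Real.cos_le_one t, sq_nonneg (1 - a), sq_nonneg (1 + a)]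
  have hz : Complex.exp (Complex.I * t) = Complex.ofReal c + Complex.ofReal s * Complex.I := by
    rw [mul_comm, Complex.exp_mul_I]
    simp [Complex.ofReal_cos, Complex.ofReal_sin, c, s]
  have key : (Complex.exp (Complex.I * t) * (1 - a * Complex.exp (Complex.I * t)) /
        (Complex.exp (Complex.I * t) - a)).im
      = 2 * a * s * (a * c - 1) / (1 - 2 * a * c + a^2) := by
    rw [hz, Complex.div_im]
    have hnsq : Complex.normSq (Complex.ofReal c + Complex.ofReal s * Complex.I - a)
        = 1 - 2 * a * c + a^2 := by
      simp [Complex.normSq_apply]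
      nlinarith [hcs]
    rw [hnsq]
    simp [Complex.mul_im, Complex.mul_re, Complex.add_im, Complex.add_re]
    field_simp
    linear_combination (-(a*s) * (1 - 2*a*c + a^2)⁻¹) * hcs
  refine ⟨key, fun ht => ?_⟩
  rw [key]
  obtain ⟨ht0, htpi⟩ := ht
  have hs : 0 < s := Real.sin_pos_of_pos_of_lt_pi ht0 htpi
  have hc : c ≤ 1 := Real.cos_le_one t
  apply div_neg_of_neg_of_pos _ hD
  have hac : a * c < 1 := lt_of_le_of_lt (by nlinarith) ha1
  nlinarith [mul_pos ha0 hs]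
end

section
/- Let a ∈ (0,1) and define f : ℝ → ℝ by f(t) = Im( e^{3it}(1−a e^{it})/(e^{it}−a) ). Then f has derivative 2(1−2a)/(1−a) at t = 0 and derivative 2(1+2a)/(1+a) at t = π. In particular, if a < 1/2 then both derivatives are positive. -/
open Complex Real

lemma key (a t₀ : ℝ) (hne : Complex.exp (Complex.I * t₀) - (a:ℂ) ≠ 0) :
    HasDerivAt (fun t : ℝ =>
        Complex.exp (3 * Complex.I * t) * (1 - a * Complex.exp (Complex.I * t)) /
          (Complex.exp (Complex.I * t) - a))
      (((Complex.exp (3*Complex.I*t₀) * (3*Complex.I) * (1 - a * Complex.exp (Complex.I*t₀))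
          + Complex.exp (3*Complex.I*t₀) * (-(a * (Complex.exp (Complex.I*t₀) * Complex.I))))
          * (Complex.exp (Complex.I*t₀) - a)
        - Complex.exp (3*Complex.I*t₀) * (1 - a * Complex.exp (Complex.I*t₀))
          * (Complex.exp (Complex.I*t₀) * Complex.I))
        / (Complex.exp (Complex.I*t₀) - a)^2) t₀ := by
  have hre : HasDerivAt (fun t : ℝ => (t : ℂ)) 1 t₀ := by
    exact (hasDerivAt_id t₀).ofReal_comp
  have h1 : HasDerivAt (fun t : ℝ => Complex.exp (3 * Complex.I * t))
      (Complex.exp (3*Complex.I*t₀) * (3*Complex.I)) t₀ := by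
    have := (hre.const_mul (3*Complex.I)).cexp
    simpa using this
  have h2 : HasDerivAt (fun t : ℝ => Complex.exp (Complex.I * t))
      (Complex.exp (Complex.I*t₀) * Complex.I) t₀ := by
    have := (hre.const_mul Complex.I).cexp
    simpa using this
  have hnum : HasDerivAt (fun t : ℝ =>
      Complex.exp (3 * Complex.I * t) * (1 - a * Complex.exp (Complex.I * t)))
      (Complex.exp (3*Complex.I*t₀) * (3*Complex.I) * (1 - a * Complex.exp (Complex.I*t₀))
        + Complex.exp (3*Complex.I*t₀) * (-(a * (Complex.exp (Complex.I*t₀) * Complex.I)))) t₀ := by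
    exact (h1.mul ((hasDerivAt_const t₀ (1:ℂ)).sub (h2.const_mul (a:ℂ)))).congr_deriv (by simp only [Pi.sub_apply]; ring)
  have hden : HasDerivAt (fun t : ℝ => Complex.exp (Complex.I * t) - (a:ℂ))
      (Complex.exp (Complex.I*t₀) * Complex.I) t₀ := h2.sub_const _
  exact hnum.div hden hne

theorem stmt_8 (a : ℝ) (ha : a ∈ Set.Ioo (0:ℝ) 1) :
    HasDerivAt (fun t : ℝ =>
        (Complex.exp (3 * Complex.I * t) * (1 - a * Complex.exp (Complex.I * t)) /
          (Complex.exp (Complex.I * t) - a)).im)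
      (2 * (1 - 2*a)/(1 - a)) 0 ∧
    HasDerivAt (fun t : ℝ =>
        (Complex.exp (3 * Complex.I * t) * (1 - a * Complex.exp (Complex.I * t)) /
          (Complex.exp (Complex.I * t) - a)).im)
      (2 * (1 + 2*a)/(1 + a)) Real.pi ∧
    (a < 1/2 → 0 < 2 * (1 - 2*a)/(1 - a) ∧ 0 < 2 * (1 + 2*a)/(1 + a)) := by
  obtain ⟨ha0, ha1⟩ := ha
  have ha1' : (1:ℂ) - a ≠ 0 := by
    simp only [sub_ne_zero]
    exact_mod_cast (ne_of_gt ha1)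
  have ha2' : (-1:ℂ) - a ≠ 0 := by
    intro h
    have : (a:ℂ) = -1 := by linear_combination -h
    have : a = -1 := by exact_mod_cast this
    linarith
  refine ⟨?_, ?_, ?_⟩
  · have hne : Complex.exp (Complex.I * (0:ℝ)) - (a:ℂ) ≠ 0 := by
      simpa using ha1'
    have h := key a 0 hne
    have h2 := (Complex.imCLM.hasFDerivAt.comp (0:ℝ) h.hasFDerivAt).hasDerivAt
    refine h2.congr_deriv (Eq.symm ?_)
    simp only [Complex.ofReal_zero, mul_zero, Complex.exp_zero]
    rw [ContinuousLinearMap.comp_apply]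
    simp only [ContinuousLinearMap.toSpanSingleton_apply, one_smul]
    have hD : ((1 * (3*Complex.I) * (1 - (a:ℂ) * 1) + 1 * (-((a:ℂ) * (1 * Complex.I)))) * (1 - a)
        - 1 * (1 - (a:ℂ) * 1) * (1 * Complex.I)) / (1 - (a:ℂ))^2
        = (((2 * (1 - 2*a)/(1 - a)) : ℝ) : ℂ) * Complex.I := by
      push_cast
      field_simp
      ring
    rw [hD]
    simp only [Complex.imCLM_apply, Complex.mul_I_im, Complex.ofReal_re]
  · have e1 : Complex.exp (Complex.I * (Real.pi:ℝ)) = -1 := by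
      rw [mul_comm]; exact_mod_cast Complex.exp_pi_mul_I
    have e3 : Complex.exp (3 * Complex.I * (Real.pi:ℝ)) = -1 := by
      rw [show (3:ℂ) * Complex.I * (Real.pi:ℝ) = (3:ℕ) * (Complex.I * (Real.pi:ℝ)) by push_cast; ring,
        Complex.exp_nat_mul, e1]
      norm_num
    have hne : Complex.exp (Complex.I * (Real.pi:ℝ)) - (a:ℂ) ≠ 0 := by
      rw [e1]; exact ha2'
    have h := key a Real.pi hne
    have h2 := (Complex.imCLM.hasFDerivAt.comp (Real.pi:ℝ) h.hasFDerivAt).hasDerivAt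
    refine h2.congr_deriv (Eq.symm ?_)
    simp only [e1, e3]
    rw [ContinuousLinearMap.comp_apply]
    simp only [ContinuousLinearMap.toSpanSingleton_apply, one_smul]
    have hD : ((-1 * (3*Complex.I) * (1 - (a:ℂ) * -1) + -1 * (-((a:ℂ) * (-1 * Complex.I)))) * (-1 - a)
        - -1 * (1 - (a:ℂ) * -1) * (-1 * Complex.I)) / (-1 - (a:ℂ))^2
        = (((2 * (1 + 2*a)/(1 + a)) : ℝ) : ℂ) * Complex.I := by
      have hne2 : (-1:ℂ) - a ≠ 0 := ha2'
      have hne3 : (1:ℂ) + a ≠ 0 := by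
        have : ((1 + a : ℝ) : ℂ) ≠ 0 := Complex.ofReal_ne_zero.2 (by linarith)
        simpa using this
      push_cast
      field_simp
      ring
    rw [hD]
    simp only [Complex.imCLM_apply, Complex.mul_I_im, Complex.ofReal_re]
  · intro h
    refine ⟨div_pos (by linarith) (by linarith), div_pos (by linarith) (by linarith)⟩
end

section
/- Fix t ∈ (0,π). Then the function x ↦ arg( (e^{it} + x)/(x e^{it} + 1) ) is strictly decreasing on the interval (0,1), where arg denotes the principal argument. -/
open Complex Real

set_option maxHeartbeats 1000000 in
theorem stmt_13 (t : ℝ) (ht : t ∈ Set.Ioo 0 Real.pi) :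
    StrictAntiOn (fun x : ℝ =>
        Complex.arg ((Complex.exp (Complex.I * t) + x) / (x * Complex.exp (Complex.I * t) + 1)))
      (Set.Ioo 0 1) := by
  obtain ⟨ht0, htpi⟩ := ht
  have hs : 0 < Real.sin t := Real.sin_pos_of_pos_of_lt_pi ht0 htpi
  set c := Real.cos t with hc
  set s := Real.sin t with hsdef
  have hcs : s ^ 2 + c ^ 2 = 1 := by
    rw [hsdef, hc]; exact Real.sin_sq_add_cos_sq t
  have hre : (Complex.exp (Complex.I * t)).re = c := by
    rw [mul_comm]; exact Complex.exp_ofReal_mul_I_re t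
  have him : (Complex.exp (Complex.I * t)).im = s := by
    rw [mul_comm]; exact Complex.exp_ofReal_mul_I_im t
  -- key facts for x ∈ (0,1)
  have key : ∀ x ∈ Set.Ioo (0:ℝ) 1,
      Complex.arg ((Complex.exp (Complex.I * t) + x) / (x * Complex.exp (Complex.I * t) + 1))
        = Real.arccos (((1 + x ^ 2) * c + 2 * x) / (x ^ 2 + 2 * x * c + 1)) ∧
      ((1 + x ^ 2) * c + 2 * x) / (x ^ 2 + 2 * x * c + 1) ∈ Set.Icc (-1 : ℝ) 1 := by
    intro x hx
    obtain ⟨hx0, hx1⟩ := hx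
    set q := (Complex.exp (Complex.I * t) + x) / (x * Complex.exp (Complex.I * t) + 1) with hq
    have hD : (0:ℝ) < x ^ 2 + 2 * x * c + 1 := by nlinarith [sq_nonneg (x + c), hs.le, hcs]
    have hnsq : Complex.normSq (x * Complex.exp (Complex.I * t) + 1) = x ^ 2 + 2 * x * c + 1 := by
      simp [Complex.normSq_apply, hre, him]
      nlinarith [hcs]
    have hz : (x * Complex.exp (Complex.I * t) + 1) ≠ 0 := by
      intro h
      rw [h, Complex.normSq_zero] at hnsq
      linarith
    have hqre : q.re = ((1 + x ^ 2) * c + 2 * x) / (x ^ 2 + 2 * x * c + 1) := by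
      rw [hq, Complex.div_re, hnsq]
      simp [hre, him]
      field_simp
      congr 1; linear_combination x * hcs
    have hqim : q.im = s * (1 - x ^ 2) / (x ^ 2 + 2 * x * c + 1) := by
      rw [hq, Complex.div_im, hnsq]
      simp [hre, him]
      field_simp
      ring
    have hqimpos : 0 < q.im := by
      rw [hqim]
      exact div_pos (mul_pos hs (by nlinarith)) hD
    have hnsq2 : Complex.normSq (Complex.exp (Complex.I * t) + x) = x ^ 2 + 2 * x * c + 1 := by
      simp [Complex.normSq_apply, hre, him]
      nlinarith [hcs]
    have habs : ‖q‖ = 1 := by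
      rw [hq, norm_div, Complex.norm_def, Complex.norm_def, hnsq, hnsq2, div_self]
      exact ne_of_gt (Real.sqrt_pos.mpr hD)
    clear_value q
    constructor
    · rw [Complex.arg_of_im_pos hqimpos, habs, hqre]
      norm_num
    · have hc1 : -1 ≤ c := Real.neg_one_le_cos t
      have hc2 : c ≤ 1 := Real.cos_le_one t
      constructor
      · rw [le_div_iff₀ hD]
        nlinarith [sq_nonneg (1 + x), mul_nonneg (by linarith : (0:ℝ) ≤ 1 + c) (sq_nonneg (1 + x))]
      · rw [div_le_iff₀ hD]
        nlinarith [mul_nonneg (by linarith : (0:ℝ) ≤ 1 - c) (sq_nonneg (x - 1))]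
  intro a ha b hb hab
  obtain ⟨ka, ma⟩ := key a ha
  obtain ⟨kb, mb⟩ := key b hb
  simp only []
  rw [ka, kb]
  apply Real.strictAntiOn_arccos ma mb
  obtain ⟨ha0, ha1⟩ := ha
  obtain ⟨hb0, hb1⟩ := hb
  have hDa : (0:ℝ) < a ^ 2 + 2 * a * c + 1 := by nlinarith [sq_nonneg (a + c), hcs]
  have hDb : (0:ℝ) < b ^ 2 + 2 * b * c + 1 := by nlinarith [sq_nonneg (b + c), hcs]
  rw [div_lt_div_iff₀ hDa hDb]
  have hkey : (0:ℝ) < (b - a) * (1 - a * b) * s ^ 2 :=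
    mul_pos (mul_pos (sub_pos.mpr hab) (by nlinarith)) (pow_pos hs 2)
  have hs2 : s ^ 2 = 1 - c ^ 2 := by linarith
  have hkey2 : (0:ℝ) < (b - a) * (1 - a * b) * (1 - c ^ 2) := by rw [← hs2]; exact hkey
  nlinarith [hkey2]
end

section
/- Fix t ∈ (0,π). Then the function b ↦ arg( (b − e^{it})/(b e^{it} − 1) ) is strictly increasing on the interval (0,1), where arg denotes the principal argument. -/
open Complex Real

theorem stmt_14 (t : ℝ) (ht : t ∈ Set.Ioo 0 Real.pi) :
    StrictMonoOn (fun b : ℝ =>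
        Complex.arg ((b - Complex.exp (Complex.I * t)) / (b * Complex.exp (Complex.I * t) - 1)))
      (Set.Ioo 0 1) := by
  set c : ℝ := Real.cos t with hc
  set s : ℝ := Real.sin t with hsdef
  have hs : 0 < s := Real.sin_pos_of_pos_of_lt_pi ht.1 ht.2
  have hcs : s ^ 2 + c ^ 2 = 1 := by
    simp [hsdef, hc, Real.sin_sq_add_cos_sq t]
  have he_re : (Complex.exp (Complex.I * t)).re = c := by
    rw [mul_comm, Complex.exp_mul_I]
    simp [hc, Complex.cos_ofReal_re]
  have he_im : (Complex.exp (Complex.I * t)).im = s := by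
    rw [mul_comm, Complex.exp_mul_I]
    simp [hsdef, Complex.sin_ofReal_re]
  -- key facts for any b ∈ (0,1)
  have key : ∀ b : ℝ, b ∈ Set.Ioo (0:ℝ) 1 →
      0 < b ^ 2 - 2 * b * c + 1 ∧
      Real.cos (Complex.arg ((b - Complex.exp (Complex.I * t)) /
          (b * Complex.exp (Complex.I * t) - 1))) =
        (c * (b ^ 2 + 1) - 2 * b) / (b ^ 2 - 2 * b * c + 1) ∧
      Complex.arg ((b - Complex.exp (Complex.I * t)) /
          (b * Complex.exp (Complex.I * t) - 1)) ∈ Set.Icc 0 Real.pi := by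
    intro b hb
    set e := Complex.exp (Complex.I * t) with he
    set N : ℂ := (b : ℂ) - e with hN
    set D : ℂ := (b : ℂ) * e - 1 with hD
    have hNre : N.re = b - c := by simp [hN, he_re]
    have hNim : N.im = -s := by simp [hN, he_im]
    have hDre : D.re = b * c - 1 := by simp [hD, he_re]
    have hDim : D.im = b * s := by simp [hD, he_im]
    have hnsD : Complex.normSq D = b ^ 2 - 2 * b * c + 1 := by
      rw [Complex.normSq_apply, hDre, hDim]; nlinarith [hcs]
    have hnsN : Complex.normSq N = b ^ 2 - 2 * b * c + 1 := by
      rw [Complex.normSq_apply, hNre, hNim]; nlinarith [hcs]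
    have hpos : 0 < b ^ 2 - 2 * b * c + 1 := by
      nlinarith [hs, hcs, sq_nonneg (b - c)]
    have hD0 : D ≠ 0 := by
      intro h
      rw [h, Complex.normSq_zero] at hnsD
      linarith
    have hN0 : N ≠ 0 := by
      intro h
      rw [h, Complex.normSq_zero] at hnsN
      linarith
    have habs : ‖N / D‖ = 1 := by
      rw [norm_div, Complex.norm_def, Complex.norm_def, hnsN, hnsD,
        div_self (Real.sqrt_pos.2 hpos).ne']
    have hw0 : N / D ≠ 0 := div_ne_zero hN0 hD0
    have hre : (N / D).re = (c * (b ^ 2 + 1) - 2 * b) / (b ^ 2 - 2 * b * c + 1) := by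
      rw [Complex.div_re, hnsD, hNre, hNim, hDre, hDim]
      rw [← add_div]
      congr 1
      linear_combination (-b) * hcs
    have him : 0 ≤ (N / D).im := by
      rw [Complex.div_im, hnsD, hNre, hNim, hDre, hDim, div_sub_div_same]
      have : -s * (b * c - 1) - (b - c) * (b * s) = s * (1 - b ^ 2) := by ring
      rw [this]
      have h1 : 0 < 1 - b ^ 2 := by nlinarith [hb.1, hb.2]
      positivity
    refine ⟨hpos, ?_, ?_⟩
    · rw [Complex.cos_arg hw0, habs, div_one, hre]
    · exact ⟨Complex.arg_nonneg_iff.2 him, Complex.arg_le_pi _⟩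
  intro a ha b hb hab
  obtain ⟨hga, hcosa, hIa⟩ := key a ha
  obtain ⟨hgb, hcosb, hIb⟩ := key b hb
  simp only
  refine (Real.strictAntiOn_cos.lt_iff_gt hIb hIa).mp ?_
  rw [hcosa, hcosb, div_lt_div_iff₀ hgb hga]
  have hab1 : 0 < 1 - a * b := by nlinarith [ha.1, ha.2, hb.1, hb.2]
  have hid : (c * (a ^ 2 + 1) - 2 * a) * (b ^ 2 - 2 * b * c + 1) -
      (c * (b ^ 2 + 1) - 2 * b) * (a ^ 2 - 2 * a * c + 1) = 2 * (b - a) * (1 - a * b) * s ^ 2 := by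
    linear_combination (-2 * (b - a) * (1 - a * b)) * hcs
  nlinarith [mul_pos (mul_pos (sub_pos.2 hab) hab1) (mul_pos hs hs)]
end

section
/- Let a ∈ (0,1) and t ∈ (0,π). Then Im( ( e^{it}(1 − a e^{it})/(e^{it} − a) )^{1/4} ) < 0, where w^{1/4} denotes the principal fourth power, defined via the principal branch of the argument in (−π, π]. -/
open Complex Real

theorem stmt_15 (a : ℝ) (ha : a ∈ Set.Ioo (0:ℝ) 1) (t : ℝ) (ht : t ∈ Set.Ioo 0 Real.pi) :
    ((Complex.exp (Complex.I * t) * (1 - a * Complex.exp (Complex.I * t)) /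
        (Complex.exp (Complex.I * t) - a)) ^ ((1:ℂ)/4)).im < 0 := by
  obtain ⟨ha0, ha1⟩ := ha
  obtain ⟨ht0, htπ⟩ := ht
  have hs : 0 < Real.sin t := Real.sin_pos_of_pos_of_lt_pi ht0 htπ
  have hc1 : Real.cos t ≤ 1 := Real.cos_le_one t
  have hc2 : -1 ≤ Real.cos t := Real.neg_one_le_cos t
  have hpyth : Real.sin t ^ 2 + Real.cos t ^ 2 = 1 := Real.sin_sq_add_cos_sq t
  have he : Complex.exp (Complex.I * t) = (Real.cos t : ℂ) + (Real.sin t : ℂ) * Complex.I := by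
    rw [mul_comm, Complex.exp_mul_I, Complex.ofReal_cos, Complex.ofReal_sin]
  set w : ℂ := Complex.exp (Complex.I * t) * (1 - a * Complex.exp (Complex.I * t)) /
      (Complex.exp (Complex.I * t) - a) with hw
  have hnsq : 0 < (Real.cos t - a) ^ 2 + Real.sin t ^ 2 := by positivity
  have hwim : w.im < 0 := by
    rw [hw, he]
    simp only [Complex.div_im, Complex.mul_im, Complex.mul_re, Complex.sub_im, Complex.sub_re,
      Complex.add_im, Complex.add_re, Complex.one_im, Complex.one_re, Complex.I_im, Complex.I_re,
      Complex.ofReal_im, Complex.ofReal_re, Complex.normSq_apply]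
    rw [div_sub_div_same]
    apply div_neg_of_neg_of_pos
    · have h1 : 0 < 1 - a * Real.cos t := by nlinarith
      nlinarith [mul_pos (mul_pos ha0 hs) h1]
    · nlinarith [mul_pos hs hs, mul_self_nonneg (Real.cos t - a)]
  have hw0 : w ≠ 0 := by
    intro h
    rw [h] at hwim
    simp at hwim
  have harg_neg : w.arg < 0 := Complex.arg_neg_iff.2 hwim
  have harg_lb : -Real.pi < w.arg := Complex.neg_pi_lt_arg w
  rw [Complex.cpow_def_of_ne_zero hw0, Complex.exp_im]
  apply mul_neg_of_pos_of_neg (Real.exp_pos _)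
  have him : (Complex.log w * ((1:ℂ)/4)).im = w.arg / 4 := by
    simp [Complex.mul_im, Complex.log_im, Complex.log_re]
    ring
  rw [him]
  exact Real.sin_neg_of_neg_of_neg_pi_lt (by linarith) (by linarith)
end

section
/- For every x ∈ (0,1), the integral ∫₀^π Im( ((e^{it} + x)/(x e^{it} + 1))^{1/2} ) dt is strictly positive, where w^{1/2} denotes the principal square root, defined via the principal branch of the argument in (−π, π]. -/
open Complex Real

lemma arg_pos_of_im_pos {w : ℂ} (hw : 0 < w.im) : 0 < w.arg := by
  have hw0 : w ≠ 0 := by intro h; simp [h] at hw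
  have hs : 0 < Real.sin w.arg := by
    rw [Complex.sin_arg]
    exact div_pos hw (norm_pos_iff.mpr hw0)
  by_contra h
  push_neg at h
  have := Real.sin_nonpos_of_nonpos_of_neg_pi_le h (Complex.neg_pi_lt_arg w).le
  linarith

lemma cpow_half_im_pos {w : ℂ} (hw : 0 < w.im) : 0 < (w ^ ((1:ℂ)/2)).im := by
  have hw0 : w ≠ 0 := by intro h; simp [h] at hw
  rw [Complex.cpow_def_of_ne_zero hw0, Complex.exp_im]
  apply mul_pos (Real.exp_pos _)
  have him : (Complex.log w * ((1:ℂ)/2)).im = w.arg / 2 := by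
    simp [Complex.mul_im, Complex.log_im]
    ring
  rw [him]
  apply Real.sin_pos_of_pos_of_lt_pi
  · exact div_pos (arg_pos_of_im_pos hw) two_pos
  · have := Complex.arg_le_pi w
    have := Real.pi_pos
    linarith

theorem stmt_16 (x : ℝ) (hx : x ∈ Set.Ioo (0:ℝ) 1) :
    0 < ∫ t in (0:ℝ)..Real.pi,
        (((Complex.exp (Complex.I * t) + x) /
          (x * Complex.exp (Complex.I * t) + 1)) ^ ((1:ℂ)/2)).im := by
  obtain ⟨hx0, hx1⟩ := hx
  set g : ℝ → ℂ := fun t => (Complex.exp (Complex.I * t) + x) / (x * Complex.exp (Complex.I * t) + 1) with hg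
  have habs : ∀ t : ℝ, ‖Complex.exp (Complex.I * t)‖ = 1 := by
    intro t
    rw [mul_comm, Complex.norm_exp_ofReal_mul_I]
  have hden : ∀ t : ℝ, (x : ℂ) * Complex.exp (Complex.I * t) + 1 ≠ 0 := by
    intro t h
    have h2 : (x : ℂ) * Complex.exp (Complex.I * t) = -1 := by linear_combination h
    have := congrArg (‖·‖) h2
    simp [habs t, abs_of_pos hx0] at this
    linarith
  have hnum : ∀ t : ℝ, Complex.exp (Complex.I * t) + (x : ℂ) ≠ 0 := by
    intro t h
    have h2 : Complex.exp (Complex.I * t) = -(x:ℂ) := by linear_combination h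
    have := congrArg (‖·‖) h2
    simp [habs t, abs_of_pos hx0] at this
    linarith
  have hg0 : ∀ t : ℝ, g t ≠ 0 := fun t => div_ne_zero (hnum t) (hden t)
  have hexp : ∀ t : ℝ, Complex.exp (Complex.I * t) = (Real.cos t : ℂ) + (Real.sin t : ℂ) * Complex.I := by
    intro t
    rw [mul_comm, Complex.exp_mul_I, Complex.ofReal_cos, Complex.ofReal_sin]
  have hgim : ∀ t ∈ Set.Ioo (0:ℝ) Real.pi, 0 < (g t).im := by
    intro t ht
    have hN : 0 < Complex.normSq ((x : ℂ) * Complex.exp (Complex.I * t) + 1) :=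
      Complex.normSq_pos.2 (hden t)
    have hsin : 0 < Real.sin t := Real.sin_pos_of_pos_of_lt_pi ht.1 ht.2
    have hzim : (Complex.exp (Complex.I * t) + (x:ℂ)).im = Real.sin t := by
      simp [hexp t, Complex.sin_ofReal_re, Complex.cos_ofReal_re]
    have hzre : (Complex.exp (Complex.I * t) + (x:ℂ)).re = Real.cos t + x := by
      simp [hexp t, Complex.sin_ofReal_re, Complex.cos_ofReal_re]
    have hwre : ((x:ℂ) * Complex.exp (Complex.I * t) + 1).re = x * Real.cos t + 1 := by
      simp [hexp t, Complex.sin_ofReal_re, Complex.cos_ofReal_re]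
    have hwim : ((x:ℂ) * Complex.exp (Complex.I * t) + 1).im = x * Real.sin t := by
      simp [hexp t, Complex.sin_ofReal_re, Complex.cos_ofReal_re]
    have : (g t).im = (Real.sin t * (x * Real.cos t + 1) - (Real.cos t + x) * (x * Real.sin t))
        / Complex.normSq ((x : ℂ) * Complex.exp (Complex.I * t) + 1) := by
      rw [hg]
      simp only [Complex.div_im, hzim, hzre, hwre, hwim]
      ring
    rw [this]
    apply div_pos _ hN
    have heq : Real.sin t * (x * Real.cos t + 1) - (Real.cos t + x) * (x * Real.sin t)
        = Real.sin t * (1 - x^2) := by ring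
    rw [heq]
    apply mul_pos hsin
    nlinarith
  -- integrability
  have hgc : Continuous g := by
    apply Continuous.div
    · exact (Complex.continuous_exp.comp (continuous_const.mul Complex.continuous_ofReal)).add continuous_const
    · exact (continuous_const.mul (Complex.continuous_exp.comp (continuous_const.mul Complex.continuous_ofReal))).add continuous_const
    · exact hden
  have hmeas : Measurable fun t => ((g t) ^ ((1:ℂ)/2)).im := by
    have : (fun t => ((g t) ^ ((1:ℂ)/2)).im)
        = fun t => (Complex.exp (Complex.log (g t) * ((1:ℂ)/2))).im := by
      funext t
      rw [Complex.cpow_def_of_ne_zero (hg0 t)]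
    rw [this]
    exact Complex.measurable_im.comp (Complex.continuous_exp.measurable.comp
      ((Complex.measurable_log.comp hgc.measurable).mul_const _))
  have hgabs : ∀ t : ℝ, ‖g t‖ ≤ (1 + x) / (1 - x) := by
    intro t
    rw [hg]
    simp only [norm_div]
    apply div_le_div₀ (by linarith) _ (by linarith) _
    · calc ‖Complex.exp (Complex.I * t) + (x:ℂ)‖
          ≤ ‖Complex.exp (Complex.I * t)‖ + ‖(x:ℂ)‖ := norm_add_le _ _
        _ = 1 + x := by rw [habs t, Complex.norm_real, Real.norm_eq_abs, abs_of_pos hx0]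
    · have h1 : ‖(x:ℂ) * Complex.exp (Complex.I * t)‖ = x := by
        rw [norm_mul, habs t, Complex.norm_real, Real.norm_eq_abs, abs_of_pos hx0, mul_one]
      calc (1:ℝ) - x = ‖(1:ℂ)‖ - ‖(x:ℂ) * Complex.exp (Complex.I * t)‖ := by
            rw [h1, norm_one]
        _ ≤ ‖(x:ℂ) * Complex.exp (Complex.I * t) + 1‖ := by
            have := norm_sub_norm_le (1:ℂ) (-((x:ℂ) * Complex.exp (Complex.I * t)))
            simp only [norm_neg, norm_one, sub_neg_eq_add] at this
            calc ‖(1:ℂ)‖ - ‖(x:ℂ) * Complex.exp (Complex.I * t)‖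
                ≤ ‖1 + (x:ℂ) * Complex.exp (Complex.I * t)‖ := by
                  simpa using this
              _ = ‖(x:ℂ) * Complex.exp (Complex.I * t) + 1‖ := by rw [add_comm]
  have hbound : ∀ t : ℝ, ‖((g t) ^ ((1:ℂ)/2)).im‖ ≤ ((1 + x) / (1 - x)) ^ ((1:ℝ)/2) := by
    intro t
    calc ‖((g t) ^ ((1:ℂ)/2)).im‖ ≤ ‖(g t) ^ ((1:ℂ)/2)‖ := Complex.abs_im_le_norm _
      _ = ‖g t‖ ^ ((1:ℝ)/2) := by
          rw [Complex.norm_cpow_of_ne_zero (hg0 t)]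
          norm_num
      _ ≤ ((1 + x) / (1 - x)) ^ ((1:ℝ)/2) := by
          apply Real.rpow_le_rpow (norm_nonneg _) (hgabs t) (by norm_num)
  have hint : IntervalIntegrable (fun t => ((g t) ^ ((1:ℂ)/2)).im) MeasureTheory.volume 0 Real.pi := by
    rw [intervalIntegrable_iff]
    have hfin : MeasureTheory.volume (Set.uIoc (0:ℝ) Real.pi) < ⊤ := by
      rw [Set.uIoc_eq_union]
      apply lt_of_le_of_lt (MeasureTheory.measure_union_le _ _)
      exact ENNReal.add_lt_top.2 ⟨measure_Ioc_lt_top, measure_Ioc_lt_top⟩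
    apply MeasureTheory.Integrable.mono'
      (g := fun _ => ((1 + x) / (1 - x)) ^ ((1:ℝ)/2))
      (MeasureTheory.integrableOn_const hfin.ne)
    · exact hmeas.aestronglyMeasurable
    · exact MeasureTheory.ae_of_all _ hbound
  have := intervalIntegral.intervalIntegral_pos_of_pos_on hint
    (fun t ht => cpow_half_im_pos (hgim t ht)) Real.pi_pos
  simpa [hg] using this
end

section
/- Fix x ∈ (0,1). Then, as a → 0⁺, the integral ∫₀^π Im( ( e^{it}(1 − a e^{it})/(e^{it} − a) )^{1/4} · ((e^{it} + x)/(x e^{it} + 1))^{1/2} ) / √(1 − 2a·cos t + a²) dt converges to ∫₀^π Im( ((e^{it} + x)/(x e^{it} + 1))^{1/2} ) dt, where w^{1/4} and w^{1/2} denote the principal powers, defined via the principal branch of the argument in (−π, π]. -/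
open Complex Real Filter Topology

lemma measurable_cpow_const' {f : ℝ → ℂ} (hf : Measurable f) (c : ℂ) :
    Measurable fun t => f t ^ c := by
  have h : (fun t => f t ^ c)
      = fun t => if f t = 0 then (if c = 0 then 1 else 0)
        else Complex.exp (Complex.log (f t) * c) := by
    funext t; rw [Complex.cpow_def]
  rw [h]
  refine Measurable.ite ?_ measurable_const ?_
  · exact hf (measurableSet_singleton 0)
  · exact Complex.measurable_exp.comp ((Complex.measurable_log.comp hf).mul_const c)

lemma abs_cpow_le_of_abs_le {z : ℂ} {M r : ℝ} (hr : 0 ≤ r) (hzM : ‖z‖ ≤ M) :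
    ‖(z ^ ((r : ℝ) : ℂ))‖ ≤ M ^ r := by
  have h := Complex.norm_cpow_le z (r : ℂ)
  simp only [Complex.ofReal_re, Complex.ofReal_im, mul_zero, Real.exp_zero, div_one] at h
  exact h.trans (Real.rpow_le_rpow (norm_nonneg z) hzM hr)

theorem stmt_18 (x : ℝ) (hx : x ∈ Set.Ioo (0:ℝ) 1) :
    Filter.Tendsto (fun a : ℝ => ∫ t in (0:ℝ)..Real.pi,
        ((Complex.exp (Complex.I * t) * (1 - a * Complex.exp (Complex.I * t)) /
            (Complex.exp (Complex.I * t) - a)) ^ ((1:ℂ)/4) *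
          ((Complex.exp (Complex.I * t) + x) /
            (x * Complex.exp (Complex.I * t) + 1)) ^ ((1:ℂ)/2)).im /
          Real.sqrt (1 - 2 * a * Real.cos t + a^2))
      (𝓝[>] 0)
      (𝓝 (∫ t in (0:ℝ)..Real.pi,
        (((Complex.exp (Complex.I * t) + x) /
          (x * Complex.exp (Complex.I * t) + 1)) ^ ((1:ℂ)/2)).im)) := by
  obtain ⟨hx0, hx1⟩ := hx
  have habse : ∀ t : ℝ, ‖(Complex.exp (Complex.I * t))‖ = 1 := by
    intro t
    rw [Complex.norm_exp]
    simp [Complex.mul_re]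
  have hhalf : ((1:ℂ)/2) = (((1:ℝ)/2 : ℝ) : ℂ) := by norm_num
  have hquarter : ((1:ℂ)/4) = (((1:ℝ)/4 : ℝ) : ℂ) := by norm_num
  -- bound on the x-factor
  have hcb : ∀ t : ℝ,
      ‖(((Complex.exp (Complex.I * t) + x) /
          (x * Complex.exp (Complex.I * t) + 1)) ^ ((1:ℂ)/2))‖
        ≤ ((1+x)/(1-x)) ^ ((1:ℝ)/2) := by
    intro t
    rw [hhalf]
    refine abs_cpow_le_of_abs_le (by norm_num) ?_
    rw [norm_div]
    have hnum : ‖(Complex.exp (Complex.I * t) + x)‖ ≤ 1 + x := by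
      calc ‖(Complex.exp (Complex.I * t) + x)‖
          ≤ ‖(Complex.exp (Complex.I * t))‖ + ‖(x:ℂ)‖ :=
            norm_add_le _ _
        _ = 1 + x := by rw [habse t, Complex.norm_real, Real.norm_eq_abs, abs_of_pos hx0]
    have hden : 1 - x ≤ ‖(x * Complex.exp (Complex.I * t) + 1)‖ := by
      have h := norm_sub_norm_le (1:ℂ) (-(x * Complex.exp (Complex.I * t)))
      simp only [sub_neg_eq_add, norm_neg, norm_one] at h
      rw [norm_mul, Complex.norm_real, Real.norm_eq_abs, abs_of_pos hx0, habse t, mul_one] at h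
      calc 1 - x ≤ ‖(1 + x * Complex.exp (Complex.I * t))‖ := h
        _ = ‖(x * Complex.exp (Complex.I * t) + 1)‖ := by rw [add_comm]
    exact div_le_div₀ (by linarith) hnum (by linarith) hden
  refine intervalIntegral.tendsto_integral_filter_of_dominated_convergence
    (fun _ => 4 * ((1+x)/(1-x)) ^ ((1:ℝ)/2)) ?_ ?_ ?_ ?_
  · -- measurability
    refine Eventually.of_forall fun a => ?_
    have hme : Measurable fun t : ℝ => Complex.exp (Complex.I * t) :=
      Complex.measurable_exp.comp (measurable_const.mul Complex.measurable_ofReal)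
    have hg : Measurable fun t : ℝ =>
        Complex.exp (Complex.I * t) * (1 - (a:ℂ) * Complex.exp (Complex.I * t)) /
          (Complex.exp (Complex.I * t) - (a:ℂ)) :=
      (hme.mul (measurable_const.sub (measurable_const.mul hme))).div
        (hme.sub measurable_const)
    have hc : Measurable fun t : ℝ =>
        ((Complex.exp (Complex.I * t) + (x:ℂ)) /
          ((x:ℂ) * Complex.exp (Complex.I * t) + 1)) :=
      (hme.add measurable_const).div ((measurable_const.mul hme).add measurable_const)
    have hnum : Measurable fun t : ℝ =>
        ((Complex.exp (Complex.I * t) * (1 - (a:ℂ) * Complex.exp (Complex.I * t)) /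
            (Complex.exp (Complex.I * t) - (a:ℂ))) ^ ((1:ℂ)/4) *
          ((Complex.exp (Complex.I * t) + (x:ℂ)) /
            ((x:ℂ) * Complex.exp (Complex.I * t) + 1)) ^ ((1:ℂ)/2)) :=
      (measurable_cpow_const' hg _).mul (measurable_cpow_const' hc _)
    have hden : Measurable fun t : ℝ => Real.sqrt (1 - 2*a*Real.cos t + a^2) :=
      Real.continuous_sqrt.measurable.comp
        ((measurable_const.sub (Real.measurable_cos.const_mul (2*a))).add measurable_const)
    exact ((Complex.measurable_im.comp hnum).div hden).aestronglyMeasurable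
  · -- bound
    filter_upwards [Ioo_mem_nhdsGT_of_mem
      (by norm_num : (0:ℝ) ∈ Set.Ico (0:ℝ) (1/2))] with a ha
    obtain ⟨ha0, ha2⟩ := ha
    refine Eventually.of_forall fun t _ => ?_
    have hs : (1:ℝ)/2 ≤ Real.sqrt (1 - 2*a*Real.cos t + a^2) := by
      have h1 : (1-a)^2 ≤ 1 - 2*a*Real.cos t + a^2 := by
        nlinarith [Real.cos_le_one t]
      have h2 := Real.sqrt_le_sqrt h1
      rw [Real.sqrt_sq (by linarith)] at h2
      linarith
    have hs0 : 0 < Real.sqrt (1 - 2*a*Real.cos t + a^2) := by linarith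
    rw [Real.norm_eq_abs, abs_div, abs_of_pos hs0, div_le_iff₀ hs0]
    -- bound on the a-factor
    have hgb : ‖
        ((Complex.exp (Complex.I * t) * (1 - (a:ℂ) * Complex.exp (Complex.I * t)) /
          (Complex.exp (Complex.I * t) - (a:ℂ))) ^ ((1:ℂ)/4))‖ ≤ 2 := by
      rw [hquarter]
      have hbase : ‖
          (Complex.exp (Complex.I * t) * (1 - (a:ℂ) * Complex.exp (Complex.I * t)) /
            (Complex.exp (Complex.I * t) - (a:ℂ)))‖ ≤ 16 := by
        rw [norm_div, norm_mul, habse t, one_mul]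
        have hA : ‖(1 - (a:ℂ) * Complex.exp (Complex.I * t))‖ ≤ 2 := by
          have h := norm_sub_le (1:ℂ) ((a:ℂ) * Complex.exp (Complex.I * t))
          simp only [norm_one] at h
          rw [norm_mul, Complex.norm_real, Real.norm_eq_abs, abs_of_pos ha0, habse t, mul_one] at h
          linarith
        have hB : (1:ℝ)/2 ≤ ‖(Complex.exp (Complex.I * t) - (a:ℂ))‖ := by
          have h := norm_sub_norm_le (Complex.exp (Complex.I * t)) ((a:ℂ))
          rw [habse t, Complex.norm_real, Real.norm_eq_abs, abs_of_pos ha0] at h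
          linarith
        calc ‖(1 - (a:ℂ) * Complex.exp (Complex.I * t))‖ /
              ‖(Complex.exp (Complex.I * t) - (a:ℂ))‖
            ≤ 2 / ((1:ℝ)/2) := div_le_div₀ (by norm_num) hA (by norm_num) hB
          _ ≤ 16 := by norm_num
      have h := abs_cpow_le_of_abs_le (M := 16) (r := (1:ℝ)/4) (by norm_num) hbase
      refine h.trans ?_
      have : (16:ℝ) ^ ((1:ℝ)/4) = 2 := by
        rw [show (16:ℝ) = 2 ^ (4:ℕ) by norm_num, ← Real.rpow_natCast 2 4,
          ← Real.rpow_mul (by norm_num)]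
        norm_num
      rw [this]
    have him : |(((Complex.exp (Complex.I * t) * (1 - (a:ℂ) * Complex.exp (Complex.I * t)) /
            (Complex.exp (Complex.I * t) - (a:ℂ))) ^ ((1:ℂ)/4) *
          ((Complex.exp (Complex.I * t) + (x:ℂ)) /
            ((x:ℂ) * Complex.exp (Complex.I * t) + 1)) ^ ((1:ℂ)/2))).im|
        ≤ 2 * (((1+x)/(1-x)) ^ ((1:ℝ)/2)) := by
      refine (Complex.abs_im_le_norm _).trans ?_
      rw [norm_mul]
      exact mul_le_mul hgb (hcb t) (norm_nonneg _) (by norm_num)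
    have hpow_nonneg : 0 ≤ ((1+x)/(1-x)) ^ ((1:ℝ)/2) :=
      Real.rpow_nonneg (div_nonneg (by linarith) (by linarith)) _
    calc |(((Complex.exp (Complex.I * t) * (1 - (a:ℂ) * Complex.exp (Complex.I * t)) /
            (Complex.exp (Complex.I * t) - (a:ℂ))) ^ ((1:ℂ)/4) *
          ((Complex.exp (Complex.I * t) + (x:ℂ)) /
            ((x:ℂ) * Complex.exp (Complex.I * t) + 1)) ^ ((1:ℂ)/2))).im|
        ≤ 2 * (((1+x)/(1-x)) ^ ((1:ℝ)/2)) := him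
      _ = (4 * ((1+x)/(1-x)) ^ ((1:ℝ)/2)) * ((1:ℝ)/2) := by ring
      _ ≤ (4 * ((1+x)/(1-x)) ^ ((1:ℝ)/2)) * Real.sqrt (1 - 2*a*Real.cos t + a^2) := by
        refine mul_le_mul_of_nonneg_left hs (mul_nonneg (by norm_num) hpow_nonneg)
  · exact intervalIntegrable_const
  · -- pointwise limit
    refine Eventually.of_forall fun t _ => ?_
    have hg : ContinuousAt (fun a : ℝ =>
        Complex.exp (Complex.I * t) * (1 - (a:ℂ) * Complex.exp (Complex.I * t)) /
          (Complex.exp (Complex.I * t) - (a:ℂ))) 0 := by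
      refine ContinuousAt.div ?_ ?_ ?_
      · exact continuousAt_const.mul (continuousAt_const.sub
          (Complex.continuous_ofReal.continuousAt.mul continuousAt_const))
      · exact continuousAt_const.sub Complex.continuous_ofReal.continuousAt
      · simp [Complex.exp_ne_zero]
    have hg0 : (fun a : ℝ =>
        Complex.exp (Complex.I * t) * (1 - (a:ℂ) * Complex.exp (Complex.I * t)) /
          (Complex.exp (Complex.I * t) - (a:ℂ))) 0 = 1 := by
      simp only [Complex.ofReal_zero, zero_mul, sub_zero, mul_one]
      exact div_self (Complex.exp_ne_zero _)
    have hpow : ContinuousAt (fun a : ℝ =>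
        (Complex.exp (Complex.I * t) * (1 - (a:ℂ) * Complex.exp (Complex.I * t)) /
          (Complex.exp (Complex.I * t) - (a:ℂ))) ^ ((1:ℂ)/4)) 0 := by
      have h1 : ContinuousAt (fun z : ℂ => z ^ ((1:ℂ)/4)) 1 :=
        continuousAt_cpow_const (by simp [Complex.mem_slitPlane_iff])
      refine ContinuousAt.comp (g := fun z : ℂ => z ^ ((1:ℂ)/4))
        (f := fun a : ℝ =>
          Complex.exp (Complex.I * t) * (1 - (a:ℂ) * Complex.exp (Complex.I * t)) /
            (Complex.exp (Complex.I * t) - (a:ℂ))) (x := 0) ?_ hg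
      beta_reduce at hg0
      rw [hg0]
      exact h1
    have hnum : ContinuousAt (fun a : ℝ =>
        ((Complex.exp (Complex.I * t) * (1 - (a:ℂ) * Complex.exp (Complex.I * t)) /
            (Complex.exp (Complex.I * t) - (a:ℂ))) ^ ((1:ℂ)/4) *
          ((Complex.exp (Complex.I * t) + (x:ℂ)) /
            ((x:ℂ) * Complex.exp (Complex.I * t) + 1)) ^ ((1:ℂ)/2)).im) 0 :=
      Complex.continuous_im.continuousAt.comp (hpow.mul continuousAt_const)
    have hden : ContinuousAt (fun a : ℝ => Real.sqrt (1 - 2*a*Real.cos t + a^2)) 0 := by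
      refine Real.continuous_sqrt.continuousAt.comp ?_
      fun_prop
    have hdenne : Real.sqrt (1 - 2*(0:ℝ)*Real.cos t + (0:ℝ)^2) ≠ 0 := by
      norm_num
    have hF : ContinuousAt (fun a : ℝ =>
        ((Complex.exp (Complex.I * t) * (1 - (a:ℂ) * Complex.exp (Complex.I * t)) /
            (Complex.exp (Complex.I * t) - (a:ℂ))) ^ ((1:ℂ)/4) *
          ((Complex.exp (Complex.I * t) + (x:ℂ)) /
            ((x:ℂ) * Complex.exp (Complex.I * t) + 1)) ^ ((1:ℂ)/2)).im /
          Real.sqrt (1 - 2*a*Real.cos t + a^2)) 0 :=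
      hnum.div hden hdenne
    have hval : ((Complex.exp (Complex.I * t) * (1 - ((0:ℝ):ℂ) * Complex.exp (Complex.I * t)) /
            (Complex.exp (Complex.I * t) - ((0:ℝ):ℂ))) ^ ((1:ℂ)/4) *
          ((Complex.exp (Complex.I * t) + (x:ℂ)) /
            ((x:ℂ) * Complex.exp (Complex.I * t) + 1)) ^ ((1:ℂ)/2)).im /
          Real.sqrt (1 - 2*(0:ℝ)*Real.cos t + (0:ℝ)^2)
        = (((Complex.exp (Complex.I * t) + (x:ℂ)) /
            ((x:ℂ) * Complex.exp (Complex.I * t) + 1)) ^ ((1:ℂ)/2)).im := by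
      have h2 : Complex.exp (Complex.I * t) * (1 - ((0:ℝ):ℂ) * Complex.exp (Complex.I * t)) /
          (Complex.exp (Complex.I * t) - ((0:ℝ):ℂ)) = 1 := hg0
      rw [h2, Complex.one_cpow, one_mul]
      norm_num
    have := hF.tendsto
    rw [hval] at this
    exact this.mono_left nhdsWithin_le_nhds
end

section
/- Let u be a complex number with u ≠ 1, and for parameters (a,b,x) set z = a·u/(u − 1) and F(z) = z·((1−az)/(z−a))·((b−z)/(bz−1))²·((z+x)/(xz+1))². Then F(a·u/(u−1)) tends to u as (a,b,x) tends to (0,1,1) within the open cube (0,1)³. -/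
open Complex Filter Topology

/-- The fourth power of the Gauss map, equation (1) of the paper. -/
noncomputable def F (a b x : ℝ) (z : ℂ) : ℂ :=
  z * ((1 - a*z)/(z - a)) * ((b - z)/(b*z - 1))^2 * ((z + x)/(x*z + 1))^2

theorem stmt_19 (u : ℂ) (hu : u ≠ 1) :
    Filter.Tendsto (fun p : ℝ × ℝ × ℝ => F p.1 p.2.1 p.2.2 ((p.1 : ℂ) * u / (u - 1)))
      (𝓝[Set.Ioo (0:ℝ) 1 ×ˢ Set.Ioo (0:ℝ) 1 ×ˢ Set.Ioo (0:ℝ) 1] (0, 1, 1))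
      (𝓝 u) := by
  have hu1 : u - 1 ≠ 0 := sub_ne_zero.mpr hu
  set g : ℝ × ℝ × ℝ → ℂ := fun p =>
    u * (1 - (p.1 : ℂ) * ((p.1 : ℂ) * u / (u - 1)))
      * (((p.2.1 : ℂ) - (p.1 : ℂ) * u / (u - 1)) / ((p.2.1 : ℂ) * ((p.1 : ℂ) * u / (u - 1)) - 1))^2
      * ((((p.1 : ℂ) * u / (u - 1)) + (p.2.2 : ℂ)) / ((p.2.2 : ℂ) * ((p.1 : ℂ) * u / (u - 1)) + 1))^2
    with hg
  have hcont : ContinuousAt g (0, 1, 1) := by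
    have hz : Continuous (fun p : ℝ × ℝ × ℝ => (p.1 : ℂ) * u / (u - 1)) := by
      fun_prop
    apply ContinuousAt.mul
    apply ContinuousAt.mul
    · exact (continuous_const.mul (continuous_const.sub
        ((continuous_ofReal.comp continuous_fst).mul hz))).continuousAt
    · apply ContinuousAt.pow
      apply ContinuousAt.div
      · exact ((continuous_ofReal.comp (continuous_fst.comp continuous_snd)).sub hz).continuousAt
      · exact (((continuous_ofReal.comp (continuous_fst.comp continuous_snd)).mul hz).sub
          continuous_const).continuousAt
      · norm_num
    · apply ContinuousAt.pow
      apply ContinuousAt.div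
      · exact (hz.add (continuous_ofReal.comp (continuous_snd.comp continuous_snd))).continuousAt
      · exact (((continuous_ofReal.comp (continuous_snd.comp continuous_snd)).mul hz).add
          continuous_const).continuousAt
      · norm_num
  have hval : g (0, 1, 1) = u := by
    simp [hg]
  have hlim : Tendsto g (𝓝[Set.Ioo (0:ℝ) 1 ×ˢ Set.Ioo (0:ℝ) 1 ×ˢ Set.Ioo (0:ℝ) 1] (0, 1, 1)) (𝓝 u) := by
    have := hcont.continuousWithinAt (s := Set.Ioo (0:ℝ) 1 ×ˢ Set.Ioo (0:ℝ) 1 ×ˢ Set.Ioo (0:ℝ) 1)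
    rwa [ContinuousWithinAt, hval] at this
  apply hlim.congr'
  filter_upwards [self_mem_nhdsWithin] with p hp
  obtain ⟨ha, _, _⟩ := hp
  have ha0 : (p.1 : ℂ) ≠ 0 := by
    exact_mod_cast ne_of_gt ha.1
  have hza : (p.1 : ℂ) * u / (u - 1) - (p.1 : ℂ) = (p.1 : ℂ) / (u - 1) := by
    field_simp
    ring
  simp only [hg, F, hza]
  congr 2
  field_simp
end
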